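/- arXiv:2504.12883 — 6 statements merged into one kernel-verified Lean document; each statement's English description precedes it below -/
import Mathlib

section
/- (Optimality of the time-dependent mirror flow for underdetermined linear regression.) Let Z be a real m×d matrix, Y ∈ ℝ^m, f̃ : ℝ^m → ℝ a differentiable function, and define the loss F(x) = f̃(Z x − Y). Let T > 0 and let (R_t)_{t ≥ 0} be a family of differentiable functions ℝ^d → ℝ such that R_t = R_T for all t ≥ T, R_T is convex, and the gradient map x ↦ ∇R_T(x) is continuous. Let x : [0,∞) → ℝ^d be a curve satisfying the time-dependent mirror flow: ∇R_0(x_0) = 0 and, for every t ≥ 0, the map s ↦ ∇R_s(x_s) has derivative −∇F(x_t) = −Zᵀ ∇f̃(Z x_t − Y) at time t. If x_t converges as t → ∞ to a limit x_∞ satisfying Z x_∞ = Y, then x_∞ minimizes the changed regularizer R_T among all interpolating solutions: for every x ∈ ℝ^d with Z x = Y, R_T(x_∞) ≤ R_T(x). -/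
open Matrix Filter
open RealInnerProductSpace


private lemma inner_eq_dot {d : ℕ} (a b : EuclideanSpace ℝ (Fin d)) :
    ⟪a, b⟫ = (a : Fin d → ℝ) ⬝ᵥ (b : Fin d → ℝ) := by
  simp [PiLp.inner_apply, RCLike.inner_apply, dotProduct, mul_comm]

/-- Optimality of the time-dependent mirror flow for underdetermined linear
regression: if the flow converges to an interpolating solution `x∞`, then `x∞`
minimizes the changed regularizer `R_T` among all interpolating solutions. -/
theorem stmt_1 {m d : ℕ} (Z : Matrix (Fin m) (Fin d) ℝ) (Y : Fin m → ℝ)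
    (ftil : EuclideanSpace ℝ (Fin m) → ℝ) (hftil : Differentiable ℝ ftil)
    (T : ℝ) (hT : 0 < T)
    (R : ℝ → EuclideanSpace ℝ (Fin d) → ℝ)
    (hRdiff : ∀ t, Differentiable ℝ (R t))
    (hRT : ∀ t, T ≤ t → R t = R T)
    (hRTconv : ConvexOn ℝ Set.univ (R T))
    (hgradcont : Continuous (fun x => gradient (R T) x))
    (x : ℝ → EuclideanSpace ℝ (Fin d))
    (hx0 : gradient (R 0) (x 0) = 0)
    (hflow : ∀ t, 0 ≤ t → HasDerivAt (fun s => gradient (R s) (x s))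
      (-(WithLp.toLp 2 (Zᵀ.mulVec (WithLp.ofLp (gradient ftil (WithLp.toLp 2 (Z.mulVec (x t) - Y : Fin m → ℝ) : EuclideanSpace ℝ (Fin m)) : EuclideanSpace ℝ (Fin m)) : Fin m → ℝ)
          : Fin d → ℝ) : EuclideanSpace ℝ (Fin d))) t)
    (xinf : EuclideanSpace ℝ (Fin d))
    (hconv : Tendsto x atTop (nhds xinf))
    (hinterp : Z.mulVec xinf = Y) :
    ∀ x' : EuclideanSpace ℝ (Fin d), Z.mulVec x' = Y → R T xinf ≤ R T x' := by
  intro x' hx'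
  set g : ℝ → EuclideanSpace ℝ (Fin d) := fun s => gradient (R s) (x s) with hg
  -- the direction along which we move
  set v : EuclideanSpace ℝ (Fin d) := x' - xinf with hv
  have hZv : Z.mulVec v = 0 := by
    show Z.mulVec (x' - xinf) = 0
    rw [Matrix.mulVec_sub, hx', hinterp, sub_self]
  -- h t = ⟪g t, v⟫ has derivative 0 for t ≥ 0
  set h : ℝ → ℝ := fun t => ⟪g t, v⟫ with hh
  have hderiv : ∀ t, 0 ≤ t → HasDerivAt h 0 t := by
    intro t ht
    have h1 := (hflow t ht).inner ℝ (hasDerivAt_const t v)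
    refine h1.congr_deriv ?_
    rw [inner_zero_right, zero_add, inner_neg_left, neg_eq_zero, inner_eq_dot, WithLp.ofLp_toLp,
      Matrix.mulVec_transpose, ← Matrix.dotProduct_mulVec, hZv, dotProduct_zero]
  -- hence h is constant equal to 0 on [0,∞)
  have hzero : ∀ t, 0 ≤ t → h t = 0 := by
    intro t ht
    have hcont : ContinuousOn h (Set.Icc 0 t) := fun s hs =>
      ((hderiv s hs.1).continuousAt).continuousWithinAt
    have hder : ∀ s ∈ Set.Ico (0:ℝ) t, HasDerivWithinAt h 0 (Set.Ici s) s := fun s hs =>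
      (hderiv s hs.1).hasDerivWithinAt
    have := constant_of_has_deriv_right_zero hcont hder t (Set.right_mem_Icc.2 ht)
    rw [this]
    show ⟪g 0, v⟫ = 0
    rw [hg]
    simp [hx0]
  -- the limit of h is ⟪gradient (R T) xinf, v⟫
  have hlim : Tendsto h atTop (nhds ⟪gradient (R T) xinf, v⟫) := by
    have h1 : Tendsto (fun t => ⟪gradient (R T) (x t), v⟫) atTop
        (nhds ⟪gradient (R T) xinf, v⟫) :=
      Tendsto.inner ((hgradcont.tendsto xinf).comp hconv) tendsto_const_nhds
    refine h1.congr' ?_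
    filter_upwards [eventually_ge_atTop T] with t ht
    show ⟪gradient (R T) (x t), v⟫ = ⟪g t, v⟫
    rw [hg]
    simp only [hRT t ht]
  have hlim0 : Tendsto h atTop (nhds (0:ℝ)) := by
    refine tendsto_const_nhds.congr' ?_
    filter_upwards [eventually_ge_atTop (0:ℝ)] with t ht
    exact (hzero t ht).symm
  have hinner : ⟪gradient (R T) xinf, v⟫ = 0 := tendsto_nhds_unique hlim hlim0
  -- convexity argument along the segment from xinf to x'
  set φ : ℝ → ℝ := fun t => R T (AffineMap.lineMap xinf x' t) with hφ
  have hφconv : ConvexOn ℝ Set.univ φ := by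
    have := hRTconv.comp_affineMap (AffineMap.lineMap xinf x' : ℝ →ᵃ[ℝ] EuclideanSpace ℝ (Fin d))
    exact this
  have hc : HasDerivAt (fun t : ℝ => (AffineMap.lineMap xinf x' t : EuclideanSpace ℝ (Fin d))) v 0 := by
    have : HasDerivAt (fun t : ℝ => t • (x' - xinf) + xinf) ((1:ℝ) • (x' - xinf)) 0 :=
      ((hasDerivAt_id (0:ℝ)).smul_const (x' - xinf)).add_const xinf
    simp only [one_smul] at this
    refine this.congr_of_eventuallyEq ?_
    filter_upwards with t
    simp [AffineMap.lineMap_apply]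
  have hF : HasFDerivAt (R T) (InnerProductSpace.toDual ℝ _ (gradient (R T) xinf)) xinf :=
    hasGradientAt_iff_hasFDerivAt.1 (hRdiff T xinf).hasGradientAt
  have hφderiv : HasDerivAt φ 0 0 := by
    have hF' : HasFDerivAt (R T) (InnerProductSpace.toDual ℝ _ (gradient (R T) xinf))
        ((AffineMap.lineMap xinf x' : ℝ →ᵃ[ℝ] EuclideanSpace ℝ (Fin d)) (0:ℝ)) := by
      simpa using hF
    have h1 := hF'.comp_hasDerivAt (x := (0:ℝ)) hc
    have h2 : (InnerProductSpace.toDual ℝ _ (gradient (R T) xinf)) v = 0 := by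
      rw [InnerProductSpace.toDual_apply_apply]
      exact hinner
    rw [h2] at h1
    exact h1
  have hslope := hφconv.le_slope_of_hasDerivAt (Set.mem_univ (0:ℝ)) (Set.mem_univ (1:ℝ))
    one_pos hφderiv
  have : slope φ 0 1 = φ 1 - φ 0 := by simp [slope_def_field]
  rw [this] at hslope
  have h0 : φ 0 = R T xinf := by simp [hφ]
  have h1 : φ 1 = R T x' := by simp [hφ]
  rw [h0, h1] at hslope
  linarith
end

section
/- (Bôcher's Wronskian criterion, used in the proof of Corollary 3.5.) Let u, v : ℝ → ℝ be real-analytic functions on all of ℝ such that the Wronskian vanishes identically, i.e. u(x)·v'(x) − v(x)·u'(x) = 0 for all x ∈ ℝ. If u is not identically zero, then there exists a constant c ∈ ℝ such that v(x) = c·u(x) for all x ∈ ℝ. -/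
/-- Bôcher's Wronskian criterion: two real-analytic functions on `ℝ` with
identically vanishing Wronskian are linearly dependent; if `u` is not
identically zero, then `v` is a constant multiple of `u`. -/
theorem stmt_2 (u v : ℝ → ℝ) (hu : AnalyticOn ℝ u Set.univ) (hv : AnalyticOn ℝ v Set.univ)
    (hW : ∀ x : ℝ, u x * deriv v x - v x * deriv u x = 0)
    (hune : ∃ x : ℝ, u x ≠ 0) :
    ∃ c : ℝ, ∀ x : ℝ, v x = c * u x := by
  obtain ⟨x0, hx0⟩ := hune
  have hu' : AnalyticOnNhd ℝ u Set.univ := analyticOn_univ.mp hu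
  have hv' : AnalyticOnNhd ℝ v Set.univ := analyticOn_univ.mp hv
  have hud : Differentiable ℝ u := fun x => (hu' x trivial).differentiableAt
  have hvd : Differentiable ℝ v := fun x => (hv' x trivial).differentiableAt
  set c := v x0 / u x0 with hc
  set w : ℝ → ℝ := fun x => v x - c * u x with hwdef
  have hwa : AnalyticOnNhd ℝ w Set.univ := hv'.sub ((analyticOnNhd_const).mul hu')
  have hwd : Differentiable ℝ w := fun x => (hwa x trivial).differentiableAt
  -- u is nonzero on a neighborhood of x0
  have hcont : ContinuousAt u x0 := hud.continuous.continuousAt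
  obtain ⟨ε, hε, hball⟩ := Metric.eventually_nhds_iff_ball.mp (hcont.eventually_ne hx0)
  set s := Metric.ball x0 ε with hs
  have hconv : Convex ℝ s := convex_ball x0 ε
  -- w/u has derivative 0 on s
  have hderiv : ∀ x ∈ s, HasDerivAt (fun y => w y / u y) 0 x := by
    intro x hx
    have hux : u x ≠ 0 := hball x hx
    have h1 : HasDerivAt w (deriv w x) x := (hwd x).hasDerivAt
    have h2 : HasDerivAt u (deriv u x) x := (hud x).hasDerivAt
    have h3 := h1.div h2 hux
    have hWd : deriv w x = deriv v x - c * deriv u x := by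
      rw [hwdef]
      rw [deriv_fun_sub (g := fun y => c * u y) (hvd x) ((differentiable_const c).mul hud x), deriv_const_mul c (hud x)]
    have : (deriv w x * u x - w x * deriv u x) / u x ^ 2 = 0 := by
      rw [hWd, hwdef]
      have := hW x
      field_simp
      ring_nf
      nlinarith [hW x]
    rwa [this] at h3
  -- hence w/u is constant 0 on s
  have hzero : ∀ x ∈ s, w x = 0 := by
    intro x hx
    have hx0s : x0 ∈ s := Metric.mem_ball_self hε
    have hdiff : DifferentiableOn ℝ (fun y => w y / u y) s :=
      fun y hy => ((hderiv y hy).differentiableAt.differentiableWithinAt)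
    have hfz : ∀ y ∈ s, fderivWithin ℝ (fun z => w z / u z) s y = 0 := by
      intro y hy
      have : fderivWithin ℝ (fun z => w z / u z) s y =
          fderiv ℝ (fun z => w z / u z) y :=
        fderivWithin_of_isOpen Metric.isOpen_ball hy
      rw [this, (hderiv y hy).hasFDerivAt.fderiv]
      apply ContinuousLinearMap.ext
      intro t
      simp
    have := hconv.is_const_of_fderivWithin_eq_zero hdiff hfz hx hx0s
    have hwx0 : w x0 = 0 := by
      simp only [hwdef, hc]
      field_simp
      ring
    have hq : w x / u x = 0 := by
      rw [this, hwx0]; simp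
    have hux : u x ≠ 0 := hball x hx
    field_simp at hq
    simpa using hq
  -- identity principle
  have hev : w =ᶠ[nhds x0] 0 := by
    filter_upwards [Metric.ball_mem_nhds x0 hε] with y hy using hzero y hy
  have := hwa.eqOn_zero_of_preconnected_of_eventuallyEq_zero
    isPreconnected_univ (Set.mem_univ x0) hev
  refine ⟨c, fun x => ?_⟩
  have hx := this (Set.mem_univ x)
  simp only [hwdef, Pi.zero_apply] at hx
  linarith
end

section
/- (Scalar form of Corollary 3.5 on separable reparameterizations.) Let g, h : ℝ → ℝ be real-analytic functions on all of ℝ with g nonconstant. Then the per-coordinate commuting condition holds, namely g'(x)·h''(x) = h'(x)·g''(x) for all x ∈ ℝ, if and only if there exist constants c, d ∈ ℝ such that h(x) = c·g(x) + d for all x ∈ ℝ. -/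
open Set Metric

/-- Scalar form of Corollary 3.5 on separable reparameterizations: for
real-analytic `g, h` with `g` nonconstant, the commuting condition
`g'·h'' = h'·g''` holds everywhere iff `h = c·g + d` for constants `c, d`. -/
theorem stmt_3 (g h : ℝ → ℝ) (hg : AnalyticOn ℝ g Set.univ) (hh : AnalyticOn ℝ h Set.univ)
    (hgnc : ∃ x y : ℝ, g x ≠ g y) :
    (∀ x : ℝ, deriv g x * deriv (deriv h) x = deriv h x * deriv (deriv g) x) ↔
      ∃ c d : ℝ, ∀ x : ℝ, h x = c * g x + d := by
  rw [analyticOn_univ] at hg hh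
  have hg1 : AnalyticOnNhd ℝ (deriv g) Set.univ := hg.deriv
  have hh1 : AnalyticOnNhd ℝ (deriv h) Set.univ := hh.deriv
  have gdiff : Differentiable ℝ g := fun x => (hg x (mem_univ x)).differentiableAt
  have hdiff : Differentiable ℝ h := fun x => (hh x (mem_univ x)).differentiableAt
  have g1diff : Differentiable ℝ (deriv g) := fun x => (hg1 x (mem_univ x)).differentiableAt
  have h1diff : Differentiable ℝ (deriv h) := fun x => (hh1 x (mem_univ x)).differentiableAt
  constructor
  · intro hcomm
    -- find a point where g' ≠ 0
    obtain ⟨x₀, hx₀⟩ : ∃ x₀, deriv g x₀ ≠ 0 := by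
      by_contra hcon
      push_neg at hcon
      obtain ⟨x, y, hxy⟩ := hgnc
      exact hxy (is_const_of_deriv_eq_zero gdiff hcon x y)
    set c : ℝ := deriv h x₀ / deriv g x₀ with hc
    set u : ℝ → ℝ := fun x => deriv h x - c * deriv g x with hu_def
    have hu : AnalyticOnNhd ℝ u Set.univ := hh1.sub (analyticOnNhd_const.mul hg1)
    have hu0 : u x₀ = 0 := by
      simp only [hu_def, hc]
      field_simp
      ring
    -- open set where g' ≠ 0
    have hs : IsOpen {x : ℝ | deriv g x ≠ 0} := by
      have : Continuous (deriv g) := g1diff.continuous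
      exact isOpen_ne_fun this continuous_const
    obtain ⟨ε, hε, hball⟩ := Metric.isOpen_iff.1 hs x₀ hx₀
    -- u / g' has zero derivative on the ball
    set q : ℝ → ℝ := fun x => u x / deriv g x with hq_def
    have hqd : ∀ x ∈ ball x₀ ε, HasDerivAt q 0 x := by
      intro x hx
      have hxne : deriv g x ≠ 0 := hball hx
      have hu' : HasDerivAt u (deriv (deriv h) x - c * deriv (deriv g) x) x :=
        ((h1diff x).hasDerivAt).sub (((g1diff x).hasDerivAt).const_mul c)
      have hg' : HasDerivAt (deriv g) (deriv (deriv g) x) x := (g1diff x).hasDerivAt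
      have := hu'.div hg' hxne
      refine (this : HasDerivAt q _ x).congr_deriv ?_
      have key := hcomm x
      rw [div_eq_zero_iff]
      left
      simp only [hu_def]
      linear_combination key
    have hqdiff : DifferentiableOn ℝ q (ball x₀ ε) :=
      fun x hx => ((hqd x hx).differentiableAt).differentiableWithinAt
    have hq0 : ∀ x ∈ ball x₀ ε, fderivWithin ℝ q (ball x₀ ε) x = 0 := by
      intro x hx
      rw [fderivWithin_of_isOpen isOpen_ball hx]
      have := (hqd x hx).hasFDerivAt.fderiv
      rw [this]
      ext
      simp
    have hqconst : ∀ y ∈ ball x₀ ε, q y = q x₀ :=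
      fun y hy => (convex_ball x₀ ε).is_const_of_fderivWithin_eq_zero hqdiff hq0 hy
        (mem_ball_self hε)
    have huball : ∀ y ∈ ball x₀ ε, u y = 0 := by
      intro y hy
      have hyne : deriv g y ≠ 0 := hball hy
      have : q y = 0 := by
        rw [hqconst y hy, hq_def]
        simp [hu0]
      simp only [hq_def, div_eq_zero_iff, hyne, or_false] at this
      simpa using this
    have huev : u =ᶠ[nhds x₀] 0 :=
      Filter.eventuallyEq_of_mem (isOpen_ball.mem_nhds (mem_ball_self hε)) huball
    have huzero : ∀ x : ℝ, u x = 0 := fun x =>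
      hu.eqOn_zero_of_preconnected_of_eventuallyEq_zero isPreconnected_univ (mem_univ x₀)
        huev (mem_univ x)
    -- hence h' = c g', so h - c g is constant
    refine ⟨c, h 0 - c * g 0, fun x => ?_⟩
    have hF : ∀ x y : ℝ, h x - c * g x = h y - c * g y := by
      apply is_const_of_deriv_eq_zero (hdiff.sub ((differentiable_const c).mul gdiff))
      intro x
      rw [deriv_sub (hdiff x) (((differentiable_const c).mul gdiff) x),
        show ((fun _ => c) * g) = fun y => c * g y from rfl, deriv_const_mul c (gdiff x)]
      have := huzero x
      simp only [hu_def] at this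
      linarith
    have := hF x 0
    linarith
  · rintro ⟨c, d, hcd⟩
    have hEq : h = fun x => c * g x + d := funext hcd
    intro x
    have d1 : deriv h = fun x => c * deriv g x := by
      funext y
      rw [hEq]
      rw [deriv_add_const]
      exact deriv_const_mul c (gdiff y)
    have d2 : deriv (deriv h) x = c * deriv (deriv g) x := by
      rw [d1]
      exact deriv_const_mul c (g1diff x)
    rw [d2, d1]
    dsimp only
    ring
end

section
/- (Depth-k reparameterizations do not commute with weight decay.) Fix k ≥ 3 and define g, h : ℝ^k → ℝ by g(w) = ∏_{i=1}^k w_i and h(w) = Σ_{i=1}^k w_i². Then for every w ∈ ℝ^k, the Lie bracket of the gradient vector fields satisfies, for each coordinate j, ([∇g, ∇h](w))_j = (4 − 2k) · ∏_{i ≠ j} w_i. In particular, for any w all of whose coordinates are nonzero, [∇g, ∇h](w) ≠ 0; hence g and h are not a commuting parameterization. -/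
/-- Depth-`k` reparameterizations do not commute with weight decay: for
`g(w) = ∏ᵢ wᵢ` and `h(w) = Σᵢ wᵢ²` with `k ≥ 3`, the Lie bracket of the gradient
fields has `j`-th coordinate `(4 − 2k)·∏_{i ≠ j} wᵢ`, and it is nonzero at any
point with all coordinates nonzero. -/
theorem stmt_5 {k : ℕ} (hk : 3 ≤ k)
    (g h : EuclideanSpace ℝ (Fin k) → ℝ)
    (hg : ∀ w : EuclideanSpace ℝ (Fin k), g w = ∏ i, w i)
    (hh : ∀ w : EuclideanSpace ℝ (Fin k), h w = ∑ i, (w i) ^ 2) :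
    (∀ (w : EuclideanSpace ℝ (Fin k)) (j : Fin k),
        (fderiv ℝ (fun z => gradient h z) w (gradient g w)
          - fderiv ℝ (fun z => gradient g z) w (gradient h w)) j
          = (4 - 2 * (k : ℝ)) * ∏ i ∈ Finset.univ.erase j, w i) ∧
    (∀ w : EuclideanSpace ℝ (Fin k), (∀ i, w i ≠ 0) →
        fderiv ℝ (fun z => gradient h z) w (gradient g w)
          - fderiv ℝ (fun z => gradient g z) w (gradient h w) ≠ 0) := by
  -- gradient of h
  have hhfun : h = fun z : EuclideanSpace ℝ (Fin k) => ∑ i, z i * z i := by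
    funext z; rw [hh z]; exact Finset.sum_congr rfl fun i _ => sq (z i)
  have hgradh : ∀ w : EuclideanSpace ℝ (Fin k), gradient h w = (2:ℝ) • w := by
    intro w
    apply HasGradientAt.gradient
    rw [hasGradientAt_iff_hasFDerivAt, hhfun]
    have h1 : ∀ i ∈ (Finset.univ : Finset (Fin k)),
        HasFDerivAt (fun z : EuclideanSpace ℝ (Fin k) => z i * z i)
          ((w i) • (EuclideanSpace.proj i : EuclideanSpace ℝ (Fin k) →L[ℝ] ℝ)
            + (w i) • (EuclideanSpace.proj i : EuclideanSpace ℝ (Fin k) →L[ℝ] ℝ)) w := by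
      intro i _
      have hp : HasFDerivAt (fun z : EuclideanSpace ℝ (Fin k) => z i)
          (EuclideanSpace.proj i : EuclideanSpace ℝ (Fin k) →L[ℝ] ℝ) w :=
        (EuclideanSpace.proj i : EuclideanSpace ℝ (Fin k) →L[ℝ] ℝ).hasFDerivAt
      exact hp.mul hp
    have h2 := HasFDerivAt.fun_sum h1
    refine h2.congr_fderiv ?_
    ext v
    simp [PiLp.inner_apply, RCLike.inner_apply, Finset.mul_sum]
    exact Finset.sum_congr rfl fun i _ => by ring
  -- gradient of g
  have hgradg : ∀ w : EuclideanSpace ℝ (Fin k), gradient g w =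
      (WithLp.toLp 2 (fun j => ∏ i ∈ Finset.univ.erase j, w i) : EuclideanSpace ℝ (Fin k)) := by
    intro w
    apply HasGradientAt.gradient
    rw [hasGradientAt_iff_hasFDerivAt, funext hg]
    have h2 := HasFDerivAt.finset_prod
      (fun i (_ : i ∈ (Finset.univ : Finset (Fin k))) =>
        (EuclideanSpace.proj i : EuclideanSpace ℝ (Fin k) →L[ℝ] ℝ).hasFDerivAt (x := w))
    refine h2.congr_fderiv ?_
    ext v
    simp [PiLp.inner_apply, RCLike.inner_apply, mul_comm]
  -- first term
  have hfh : ∀ w : EuclideanSpace ℝ (Fin k), fderiv ℝ (fun z => gradient h z) w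
      = ((2:ℝ) • ContinuousLinearMap.id ℝ (EuclideanSpace ℝ (Fin k))) := by
    intro w
    have he : (fun z : EuclideanSpace ℝ (Fin k) => gradient h z)
        = fun z => ((2:ℝ) • ContinuousLinearMap.id ℝ (EuclideanSpace ℝ (Fin k))) z := by
      funext z; simp [hgradh z]
    rw [he]
    exact (((2:ℝ) • ContinuousLinearMap.id ℝ (EuclideanSpace ℝ (Fin k))).hasFDerivAt).fderiv
  -- derivative of gradient g
  have hfg : ∀ (w v : EuclideanSpace ℝ (Fin k)) (j : Fin k),
      fderiv ℝ (fun z => gradient g z) w v j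
      = ∑ l ∈ Finset.univ.erase j, (∏ i ∈ (Finset.univ.erase j).erase l, w i) * v l := by
    intro w v j
    set B : EuclideanSpace ℝ (Fin k) →L[ℝ] EuclideanSpace ℝ (Fin k) :=
      ((PiLp.continuousLinearEquiv 2 ℝ (fun _ : Fin k => ℝ)).symm :
          (Fin k → ℝ) →L[ℝ] EuclideanSpace ℝ (Fin k)).comp
        (ContinuousLinearMap.pi (fun j => ∑ l ∈ Finset.univ.erase j,
          (∏ i ∈ (Finset.univ.erase j).erase l, w i) •
          (EuclideanSpace.proj l : EuclideanSpace ℝ (Fin k) →L[ℝ] ℝ))) with hB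
    set G : EuclideanSpace ℝ (Fin k) → EuclideanSpace ℝ (Fin k) :=
      fun z => (WithLp.equiv 2 (Fin k → ℝ)).symm
        (fun j => ∏ i ∈ Finset.univ.erase j, z i) with hGdef
    have hG : HasFDerivAt G B w := by
      rw [← hasFDerivWithinAt_univ, hasFDerivWithinAt_piLp]
      intro j'
      rw [hasFDerivWithinAt_univ]
      have hφ : HasFDerivAt (fun z : EuclideanSpace ℝ (Fin k) =>
          ∏ i ∈ Finset.univ.erase j', z i)
          (∑ l ∈ Finset.univ.erase j', (∏ i ∈ (Finset.univ.erase j').erase l, w i) •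
            (EuclideanSpace.proj l : EuclideanSpace ℝ (Fin k) →L[ℝ] ℝ)) w :=
        HasFDerivAt.finset_prod (fun i _ =>
          (EuclideanSpace.proj i : EuclideanSpace ℝ (Fin k) →L[ℝ] ℝ).hasFDerivAt)
      refine (hφ.congr_fderiv ?_).congr_of_eventuallyEq
        (Filter.Eventually.of_forall fun z => rfl)
      ext v
      simp [hB]
    have hGg : (fun z : EuclideanSpace ℝ (Fin k) => gradient g z) = G := by
      funext z; rw [hgradg z]; rfl
    rw [hGg, hG.fderiv]
    have hBv : B v j = (∑ l ∈ Finset.univ.erase j,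
        (∏ i ∈ (Finset.univ.erase j).erase l, w i) •
        (EuclideanSpace.proj l : EuclideanSpace ℝ (Fin k) →L[ℝ] ℝ)) v := rfl
    rw [hBv]
    simp only [ContinuousLinearMap.sum_apply, ContinuousLinearMap.smul_apply, smul_eq_mul]
    rfl
  have key : ∀ (w : EuclideanSpace ℝ (Fin k)) (j : Fin k),
      (fderiv ℝ (fun z => gradient h z) w (gradient g w)
        - fderiv ℝ (fun z => gradient g z) w (gradient h w)) j
        = (4 - 2 * (k : ℝ)) * ∏ i ∈ Finset.univ.erase j, w i := by
    intro w j
    have hcard : ((Finset.univ.erase j).card : ℝ) = (k : ℝ) - 1 := by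
      rw [Finset.card_erase_of_mem (Finset.mem_univ j), Finset.card_univ, Fintype.card_fin]
      push_cast [Nat.cast_sub (by omega : 1 ≤ k)]
      ring
    have e1 : fderiv ℝ (fun z => gradient h z) w (gradient g w) j
        = 2 * ∏ i ∈ Finset.univ.erase j, w i := by
      rw [hfh w, hgradg w]
      simp
    have e2 : fderiv ℝ (fun z => gradient g z) w (gradient h w) j
        = 2 * ((k : ℝ) - 1) * ∏ i ∈ Finset.univ.erase j, w i := by
      rw [hgradh w, hfg w _ j]
      have hterm : ∀ l ∈ Finset.univ.erase j,
          (∏ i ∈ (Finset.univ.erase j).erase l, w i) * ((2:ℝ) • w) l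
            = 2 * ∏ i ∈ Finset.univ.erase j, w i := by
        intro l hl
        have hpe : (∏ i ∈ (Finset.univ.erase j).erase l, w i) * w l
            = ∏ i ∈ Finset.univ.erase j, w i := Finset.prod_erase_mul _ _ hl
        have h2l : ((2:ℝ) • w) l = 2 * w l := rfl
        rw [h2l, mul_comm 2 (w l), ← mul_assoc, hpe]
        ring
      rw [Finset.sum_congr rfl hterm, Finset.sum_const, nsmul_eq_mul, hcard]
      ring
    simp only [PiLp.sub_apply]
    rw [e1, e2]; ring
  refine ⟨key, ?_⟩
  intro w hw hzero
  set j : Fin k := ⟨0, by omega⟩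
  have h0 : (fderiv ℝ (fun z => gradient h z) w (gradient g w)
      - fderiv ℝ (fun z => gradient g z) w (gradient h w)) j = 0 := by
    rw [hzero]; rfl
  rw [key w j] at h0
  rcases mul_eq_zero.1 h0 with hc | hp
  · have : (3 : ℝ) ≤ (k : ℝ) := by exact_mod_cast hk
    nlinarith
  · exact (Finset.prod_ne_zero_iff.2 fun i _ => hw i) hp
end

section
/- (Contracting property of the time-dependent hyperbolic entropy.) For every fixed x ∈ ℝ, the map A ↦ x·arcsinh(x/A) − √(x² + A²) is strictly decreasing on (0, ∞), with derivative with respect to A equal to −√(x² + A²)/A < 0. Consequently, since A(a) = 2 e^{2a} u₀ v₀ is increasing in a for u₀, v₀ > 0, the time-dependent hyperbolic entropy of Eq. (7) is contracting: it is nonincreasing in the accumulated regularization parameter a. -/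
lemma aux_deriv (x A : ℝ) (hA : 0 < A) :
    HasDerivAt (fun A' : ℝ => x * Real.arsinh (x / A') - Real.sqrt (x ^ 2 + A' ^ 2))
      (-Real.sqrt (x ^ 2 + A ^ 2) / A) A := by
  have hpos : 0 < x ^ 2 + A ^ 2 := by positivity
  have hs : 0 < Real.sqrt (x ^ 2 + A ^ 2) := Real.sqrt_pos.mpr hpos
  have hsq : Real.sqrt (x ^ 2 + A ^ 2) ^ 2 = x ^ 2 + A ^ 2 := Real.sq_sqrt hpos.le
  have h1 : HasDerivAt (fun A' : ℝ => x / A') (x * (-(A ^ 2)⁻¹)) A := by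
    simpa [div_eq_mul_inv] using (hasDerivAt_inv hA.ne').const_mul x
  have h2 : HasDerivAt (fun A' : ℝ => Real.arsinh (x / A'))
      ((Real.sqrt (1 + (x / A) ^ 2))⁻¹ * (x * (-(A ^ 2)⁻¹))) A :=
    (Real.hasDerivAt_arsinh _).comp A h1
  have h3 : HasDerivAt (fun A' : ℝ => x ^ 2 + A' ^ 2) (2 * A) A := by
    simpa using ((hasDerivAt_pow 2 A).const_add (x ^ 2))
  have h4 : HasDerivAt (fun A' : ℝ => Real.sqrt (x ^ 2 + A' ^ 2))
      ((2 * A) / (2 * Real.sqrt (x ^ 2 + A ^ 2))) A := by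
    have := (Real.hasDerivAt_sqrt hpos.ne').comp A h3
    exact h3.sqrt hpos.ne'
  have key : x * ((Real.sqrt (1 + (x / A) ^ 2))⁻¹ * (x * (-(A ^ 2)⁻¹)))
      - (2 * A) / (2 * Real.sqrt (x ^ 2 + A ^ 2)) = -Real.sqrt (x ^ 2 + A ^ 2) / A := by
    have h5 : Real.sqrt (1 + (x / A) ^ 2) = Real.sqrt (x ^ 2 + A ^ 2) / A := by
      rw [eq_div_iff hA.ne', ← Real.sqrt_sq hA.le, ← Real.sqrt_mul (by positivity)]
      congr 1
      field_simp
      linear_combination -(Real.sqrt (A ^ 2) ^ 2 + x ^ 2) * Real.sq_sqrt (sq_nonneg A)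
    rw [h5]
    field_simp
    linear_combination hsq
  have := (h2.const_mul x).sub h4
  rw [← key]
  exact this

/-- Contracting property of the time-dependent hyperbolic entropy: for fixed `x`,
the map `A ↦ x·arcsinh(x/A) − √(x² + A²)` has derivative `−√(x² + A²)/A < 0` on
`(0, ∞)`, hence is strictly decreasing there; consequently, since
`A(a) = 2e^{2a}u₀v₀` is increasing in `a`, the time-dependent hyperbolic entropy
is nonincreasing in the accumulated regularization parameter `a`. -/
theorem stmt_10 (x : ℝ) :
    (∀ A : ℝ, 0 < A →
      HasDerivAt (fun A' : ℝ => x * Real.arsinh (x / A') - Real.sqrt (x ^ 2 + A' ^ 2))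
        (-Real.sqrt (x ^ 2 + A ^ 2) / A) A) ∧
    (∀ A : ℝ, 0 < A → -Real.sqrt (x ^ 2 + A ^ 2) / A < 0) ∧
    StrictAntiOn (fun A : ℝ => x * Real.arsinh (x / A) - Real.sqrt (x ^ 2 + A ^ 2))
      (Set.Ioi 0) ∧
    (∀ u₀ v₀ : ℝ, 0 < u₀ → 0 < v₀ →
      Antitone (fun a : ℝ =>
        x * Real.arsinh (x / (2 * Real.exp (2 * a) * u₀ * v₀)) -
          Real.sqrt (x ^ 2 + (2 * Real.exp (2 * a) * u₀ * v₀) ^ 2))) := by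
  have hneg : ∀ A : ℝ, 0 < A → -Real.sqrt (x ^ 2 + A ^ 2) / A < 0 := by
    intro A hA
    have : 0 < Real.sqrt (x ^ 2 + A ^ 2) := Real.sqrt_pos.mpr (by positivity)
    exact div_neg_of_neg_of_pos (neg_neg_of_pos this) hA
  have hanti : StrictAntiOn (fun A : ℝ => x * Real.arsinh (x / A) - Real.sqrt (x ^ 2 + A ^ 2))
      (Set.Ioi 0) := by
    apply strictAntiOn_of_deriv_neg (convex_Ioi 0)
    · exact fun A hA => ((aux_deriv x A hA).continuousAt).continuousWithinAt
    · intro A hA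
      rw [interior_Ioi] at hA
      rw [(aux_deriv x A hA).deriv]
      exact hneg A hA
  refine ⟨fun A hA => aux_deriv x A hA, hneg, hanti, ?_⟩
  intro u₀ v₀ hu hv a b hab
  have hg : ∀ a : ℝ, (0:ℝ) < 2 * Real.exp (2 * a) * u₀ * v₀ := fun a => by positivity
  have hmono : 2 * Real.exp (2 * a) * u₀ * v₀ ≤ 2 * Real.exp (2 * b) * u₀ * v₀ := by
    gcongr
  exact hanti.antitoneOn (hg a) (hg b) hmono
end

section
/- (Properties of the time-dependent Legendre function for the reparameterization log(u) − log(v), Appendix E, in one coordinate.) Let p > 0 and q > 0 and define f : ℝ → ℝ by f(x) = p·log(e^{−2x} + 1) + q·log(e^{2x} + 1). Then: (i) f is differentiable with f'(x) = 2·(q·e^{2x} − p)/(1 + e^{2x}); (ii) f is strictly convex on ℝ; (iii) f has the unique global minimizer x* = (1/2)·log(p/q), i.e. f((1/2)·log(p/q)) < f(x) for all x ≠ (1/2)·log(p/q). -/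
/-- Properties of the time-dependent Legendre function for the
reparameterization `log u − log v` (Appendix E) in one coordinate:
`f(x) = p·log(e^{−2x} + 1) + q·log(e^{2x} + 1)` with `p, q > 0` is
differentiable with derivative `2(q·e^{2x} − p)/(1 + e^{2x})`, strictly convex
on `ℝ`, and has unique global minimizer `x* = (1/2)·log(p/q)`. -/
theorem stmt_12 (p q : ℝ) (hp : 0 < p) (hq : 0 < q) (f : ℝ → ℝ)
    (hf : ∀ x : ℝ,
      f x = p * Real.log (Real.exp (-2 * x) + 1) + q * Real.log (Real.exp (2 * x) + 1)) :
    (∀ x : ℝ,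
      HasDerivAt f (2 * (q * Real.exp (2 * x) - p) / (1 + Real.exp (2 * x))) x) ∧
    StrictConvexOn ℝ Set.univ f ∧
    (∀ x : ℝ, x ≠ (1 / 2) * Real.log (p / q) →
      f ((1 / 2) * Real.log (p / q)) < f x) := by
  have hfunext : f = fun x => p * Real.log (Real.exp (-2 * x) + 1) +
      q * Real.log (Real.exp (2 * x) + 1) := funext hf
  have hderiv : ∀ x : ℝ,
      HasDerivAt f (2 * (q * Real.exp (2 * x) - p) / (1 + Real.exp (2 * x))) x := by
    intro x
    have e1 : HasDerivAt (fun x : ℝ => Real.exp (-2 * x) + 1)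
        (Real.exp (-2 * x) * (-2)) x := by
      simpa using ((hasDerivAt_id x).const_mul (-2 : ℝ)).exp.add_const 1
    have e2 : HasDerivAt (fun x : ℝ => Real.exp (2 * x) + 1)
        (Real.exp (2 * x) * 2) x := by
      simpa using ((hasDerivAt_id x).const_mul (2 : ℝ)).exp.add_const 1
    have h1 : (0:ℝ) < Real.exp (-2 * x) + 1 := by positivity
    have h2 : (0:ℝ) < Real.exp (2 * x) + 1 := by positivity
    have l1 := (e1.log h1.ne').const_mul p
    have l2 := (e2.log h2.ne').const_mul q
    have := l1.add l2
    rw [hfunext]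
    refine HasDerivAt.congr_deriv this ?_
    have hne : Real.exp (-2 * x) = (Real.exp (2 * x))⁻¹ := by
      rw [← Real.exp_neg]; ring_nf
    rw [hne]
    have he : (0:ℝ) < Real.exp (2 * x) := Real.exp_pos _
    field_simp
    ring
  have hderiv' : deriv f = fun x =>
      2 * (q * Real.exp (2 * x) - p) / (1 + Real.exp (2 * x)) :=
    funext fun x => (hderiv x).deriv
  have hmono : StrictMono (deriv f) := by
    rw [hderiv']
    intro x y hxy
    have hx : (0:ℝ) < 1 + Real.exp (2 * x) := by positivity
    have hy : (0:ℝ) < 1 + Real.exp (2 * y) := by positivity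
    rw [div_lt_div_iff₀ hx hy]
    have h := Real.exp_lt_exp.2 (by linarith : 2 * x < 2 * y)
    nlinarith [Real.exp_pos (2 * x), Real.exp_pos (2 * y)]
  have hconv : StrictConvexOn ℝ Set.univ f :=
    hmono.strictConvexOn_univ_of_deriv
      (continuousOn_univ.1 (HasDerivAt.continuousOn fun x _ => hderiv x))
  refine ⟨hderiv, hconv, ?_⟩
  set x₀ : ℝ := (1 / 2) * Real.log (p / q) with hx₀
  have hexp : Real.exp (2 * x₀) = p / q := by
    rw [hx₀]
    rw [show 2 * ((1/2) * Real.log (p/q)) = Real.log (p/q) by ring]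
    exact Real.exp_log (by positivity)
  have hd0 : HasDerivAt f 0 x₀ := by
    have := hderiv x₀
    rw [hexp] at this
    convert this using 1
    field_simp
    ring
  intro x hx
  rcases lt_or_gt_of_ne hx with h | h
  · have := hconv.slope_lt_of_hasDerivAt (Set.mem_univ x) (Set.mem_univ x₀) h hd0
    rw [slope_def_field] at this
    have hd : x₀ - x > 0 := by linarith
    rw [div_lt_iff₀ hd] at this
    linarith
  · have := hconv.lt_slope_of_hasDerivAt (Set.mem_univ x₀) (Set.mem_univ x) h hd0
    rw [slope_def_field] at this
    have hd : x - x₀ > 0 := by linarith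
    rw [lt_div_iff₀ hd] at this
    linarith
end
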